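/- Let λ > 0 and ε ∈ (0, 1). For all v ∈ [0, λ], it holds that λ·log(ε·exp(v/λ) + (1 − ε)) ≤ λ·ε·(e − 1), where e is Euler's number. Equivalently, −λ·log(ε + (1−ε)·exp(−v/λ)) ≥ v − λ·ε·(e − 1). -/

import Mathlib

theorem kl_perturb_bound (lam ε v : ℝ) (hlam : 0 < lam) (hε : ε ∈ Set.Ioo (0 : ℝ) 1)
    (hv : v ∈ Set.Icc 0 lam) :
    lam * Real.log (ε * Real.exp (v / lam) + (1 - ε)) ≤ lam * ε * (Real.exp 1 - 1) ∧
    v - lam * ε * (Real.exp 1 - 1) ≤ -lam * Real.log (ε + (1 - ε) * Real.exp (-v / lam)) := by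
  obtain ⟨hε0, hε1⟩ := hε
  obtain ⟨hv0, hvl⟩ := hv
  set t := v / lam with ht
  have ht0 : 0 ≤ t := div_nonneg hv0 hlam.le
  have ht1 : t ≤ 1 := (div_le_one hlam).2 hvl
  have hy : 0 < ε * Real.exp t + (1 - ε) := by
    have := Real.exp_pos t
    nlinarith
  have hlog : Real.log (ε * Real.exp t + (1 - ε)) ≤ ε * (Real.exp 1 - 1) := by
    have h1 : Real.log (ε * Real.exp t + (1 - ε)) ≤ ε * Real.exp t + (1 - ε) - 1 :=
      Real.log_le_sub_one_of_pos hy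
    have h2 : Real.exp t ≤ Real.exp 1 := Real.exp_le_exp.2 ht1
    nlinarith
  have part1 : lam * Real.log (ε * Real.exp t + (1 - ε)) ≤ lam * ε * (Real.exp 1 - 1) := by
    rw [mul_assoc]
    exact mul_le_mul_of_nonneg_left hlog hlam.le
  refine ⟨part1, ?_⟩
  have hsplit : ε + (1 - ε) * Real.exp (-t) = Real.exp (-t) * (ε * Real.exp t + (1 - ε)) := by
    rw [mul_add, ← mul_assoc, mul_comm (Real.exp (-t)) ε, mul_assoc, ← Real.exp_add]
    simp [mul_comm]
  have hlog2 : Real.log (ε + (1 - ε) * Real.exp (-t)) =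
      -t + Real.log (ε * Real.exp t + (1 - ε)) := by
    rw [hsplit, Real.log_mul (Real.exp_ne_zero _) (ne_of_gt hy), Real.log_exp]
  rw [neg_div, hlog2]
  have : lam * t = v := by rw [ht]; field_simp
  nlinarith [part1]
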